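/- arXiv:1407.4545 — 2 statements merged into one kernel-verified Lean document; each statement's English description precedes it below -/
import Mathlib

section
/- There exists a positive constant c₁ such that for all real σ ≥ 1/2 and all real t with |t| ≥ 2, |ζ(σ + it)| ≤ c₁ |t|^{1/2}. -/
open Complex

open Complex Filter Set MeasureTheory
open scoped Interval Topology

noncomputable def zf (n : ℕ) (s : ℂ) : ℂ :=
  (((n : ℝ) + 1 : ℝ) : ℂ) ^ (-s) - ∫ x in ((n : ℝ) + 1)..((n : ℝ) + 2), (x : ℂ) ^ (-s)

lemma zf_integrable (s : ℂ) {a b : ℝ} (ha : 0 < a) (hab : a ≤ b) :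
    IntervalIntegrable (fun x : ℝ => (x : ℂ) ^ (-s)) volume a b := by
  apply ContinuousOn.intervalIntegrable
  intro x hx
  have hx0 : 0 < x := by
    rw [Set.uIcc_of_le hab] at hx; exact lt_of_lt_of_le ha hx.1
  exact ((continuousAt_cpow_const (Complex.ofReal_mem_slitPlane.2 hx0)).comp
    Complex.continuous_ofReal.continuousAt).continuousWithinAt

open intervalIntegral in
lemma zf_eq {s : ℂ} (hs : s ≠ 1) (n : ℕ) :
    zf n s = (((n : ℝ) + 1 : ℝ) : ℂ) ^ (-s)
      - ((((n : ℝ) + 2 : ℝ) : ℂ) ^ (1 - s) - (((n : ℝ) + 1 : ℝ) : ℂ) ^ (1 - s)) / (1 - s) := by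
  have h0 : (0:ℝ) ∉ [[(n:ℝ)+1, (n:ℝ)+2]] := by
    rw [Set.uIcc_of_le (by linarith)]
    rintro ⟨h, -⟩
    have : (0:ℝ) < (n:ℝ)+1 := by positivity
    linarith
  have hns : -s ≠ -1 := fun h => hs (by simpa using neg_injective h)
  rw [zf, integral_cpow (Or.inr ⟨hns, h0⟩)]
  rw [show -s + 1 = 1 - s by ring]

lemma zf_norm_le {s : ℂ} (hre : 0 < s.re) (n : ℕ) :
    ‖zf n s‖ ≤ ‖s‖ * ((n : ℝ) + 1) ^ (-s.re - 1) := by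
  have hs0 : s ≠ 0 := fun h => by simp [h] at hre
  set a : ℝ := (n:ℝ) + 1 with ha_def
  have ha : (1:ℝ) ≤ a := le_add_of_nonneg_left (Nat.cast_nonneg n)
  have ha0 : (0:ℝ) < a := by linarith
  set C : ℝ := ‖s‖ * a ^ (-s.re - 1) with hC_def
  -- derivative facts
  have hderiv : ∀ x ∈ Set.Icc a (a+1),
      HasDerivWithinAt (fun y : ℝ => (y:ℂ) ^ (-s)) (-s * (x:ℂ) ^ (-s-1)) (Set.Icc a (a+1)) x := by
    intro x hx
    have hx0 : (0:ℝ) < x := lt_of_lt_of_le ha0 hx.1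
    have hr : -s - 1 ≠ -1 := fun h => hs0 (by simpa using h)
    have h := (hasDerivAt_ofReal_cpow_const' hx0.ne' hr).const_mul (-s)
    have heq : (fun y : ℝ => -s * ((y:ℂ) ^ (-s-1+1) / (-s-1+1))) = fun y : ℝ => (y:ℂ) ^ (-s) := by
      funext y
      rw [show -s-1+1 = -s by ring]
      field_simp
    rw [heq] at h
    exact h.hasDerivWithinAt
  have hbound : ∀ x ∈ Set.Icc a (a+1), ‖-s * (x:ℂ) ^ (-s-1)‖ ≤ C := by
    intro x hx
    have hx0 : (0:ℝ) < x := lt_of_lt_of_le ha0 hx.1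
    rw [norm_mul, norm_neg]
    rw [Complex.norm_cpow_eq_rpow_re_of_pos hx0]
    have hexp : (-s - 1).re = -s.re - 1 := by simp
    rw [hexp]
    apply mul_le_mul_of_nonneg_left _ (norm_nonneg s)
    exact Real.rpow_le_rpow_of_nonpos ha0 hx.1 (by linarith)
  have hMVT : ∀ x ∈ Set.Icc a (a+1), ‖(a:ℂ) ^ (-s) - (x:ℂ) ^ (-s)‖ ≤ C := by
    intro x hx
    have h := (convex_Icc a (a+1)).norm_image_sub_le_of_norm_hasDerivWithin_le hderiv hbound
      (Set.left_mem_Icc.2 (by linarith)) hx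
    rw [norm_sub_rev]
    refine h.trans ?_
    have h1 : ‖x - a‖ ≤ 1 := by
      rw [Real.norm_eq_abs, abs_le]
      constructor <;> linarith [hx.1, hx.2]
    calc C * ‖x - a‖ ≤ C * 1 := by
          apply mul_le_mul_of_nonneg_left h1
          positivity
      _ = C := mul_one C
  -- integral representation
  have hrep : zf n s = ∫ x in a..(a+1), ((a:ℂ) ^ (-s) - (x:ℂ) ^ (-s)) := by
    rw [intervalIntegral.integral_sub (intervalIntegrable_const) (zf_integrable s ha0 (by linarith))]
    rw [intervalIntegral.integral_const]
    rw [show a + 1 - a = (1:ℝ) by ring, one_smul, zf]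
    rw [show (n:ℝ) + 2 = a + 1 by rw [ha_def]; ring]
  rw [hrep]
  have := intervalIntegral.norm_integral_le_of_norm_le_const
    (C := C) (a := a) (b := a + 1)
    (f := fun x : ℝ => (a:ℂ) ^ (-s) - (x:ℂ) ^ (-s)) ?_
  · calc ‖∫ x in a..(a+1), ((a:ℂ) ^ (-s) - (x:ℂ) ^ (-s))‖ ≤ C * |a + 1 - a| := this
      _ = C := by rw [show a + 1 - a = (1:ℝ) by ring]; simp
  · intro x hx
    apply hMVT
    rw [Set.uIoc_of_le (by linarith : a ≤ a + 1)] at hx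
    exact ⟨le_of_lt hx.1, hx.2⟩

lemma summable_aux {q : ℝ} (hq : q < -1) : Summable (fun n : ℕ => ((n:ℝ) + 1) ^ q) := by
  have h : Summable (fun n : ℕ => (n:ℝ) ^ q) := Real.summable_nat_rpow.2 hq
  have h2 := h.comp_injective (add_left_injective 1)
  refine h2.congr fun n => ?_
  simp only [Function.comp_apply]
  push_cast
  ring_nf

lemma zf_summable {s : ℂ} (hre : 0 < s.re) : Summable (fun n => zf n s) :=
  Summable.of_norm_bounded ((summable_aux (q := -s.re - 1) (by linarith)).mul_left ‖s‖)
    (zf_norm_le hre)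

lemma sum_range_zf {s : ℂ} (hs : s ≠ 1) (N : ℕ) :
    ∑ n ∈ Finset.range N, zf n s
      = (∑ n ∈ Finset.range N, (((n:ℝ) + 1 : ℝ) : ℂ) ^ (-s))
        - ((((N:ℝ) + 1 : ℝ) : ℂ) ^ (1 - s) / (1 - s) - 1 / (1 - s)) := by
  set g : ℕ → ℂ := fun n => (((n:ℝ) + 1 : ℝ) : ℂ) ^ (1 - s) / (1 - s) with hg
  have h1 : ∀ n, zf n s = (((n:ℝ) + 1 : ℝ) : ℂ) ^ (-s) - (g (n+1) - g n) := by
    intro n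
    rw [zf_eq hs, hg]
    have hb : (((n:ℝ) + 2 : ℝ) : ℂ) = ((((n+1:ℕ):ℝ) + 1 : ℝ) : ℂ) := by push_cast; ring
    rw [hb]
    ring
  simp only [h1]
  rw [Finset.sum_sub_distrib, Finset.sum_range_sub (f := g)]
  have hg0 : g 0 = 1 / (1 - s) := by
    simp only [hg]
    norm_num
  rw [hg0]

lemma key_gt_one {s : ℂ} (hs : 1 < s.re) :
    riemannZeta s = 1 / (s - 1) + ∑' n, zf n s := by
  have hre : (0:ℝ) < s.re := by linarith
  have hs1 : s ≠ 1 := by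
    intro h; rw [h] at hs; simp at hs
  have hsum := zf_summable hre
  have hA : Tendsto (fun N => ∑ n ∈ Finset.range N, (((n:ℝ) + 1 : ℝ) : ℂ) ^ (-s)) atTop
      (𝓝 (riemannZeta s)) := by
    have hsum2 : Summable (fun n : ℕ => (((n:ℝ) + 1 : ℝ) : ℂ) ^ (-s)) := by
      apply Summable.of_norm_bounded (summable_aux (q := -s.re) (by linarith))
      intro n
      rw [Complex.norm_cpow_eq_rpow_re_of_pos (by positivity)]
      simp
    have hz : riemannZeta s = ∑' n : ℕ, (((n:ℝ) + 1 : ℝ) : ℂ) ^ (-s) := by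
      rw [zeta_eq_tsum_one_div_nat_add_one_cpow hs]
      congr 1
      funext n
      rw [Complex.cpow_neg, one_div]
      norm_num
    rw [hz]
    exact hsum2.hasSum.tendsto_sum_nat
  have hB : Tendsto (fun N : ℕ => (((N:ℝ) + 1 : ℝ) : ℂ) ^ (1 - s) / (1 - s)) atTop (𝓝 0) := by
    rw [tendsto_zero_iff_norm_tendsto_zero]
    have hnorm : ∀ N : ℕ, ‖(((N:ℝ) + 1 : ℝ) : ℂ) ^ (1 - s) / (1 - s)‖
        = ((N:ℝ) + 1) ^ (1 - s.re) / ‖1 - s‖ := by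
      intro N
      rw [norm_div]
      congr 1
      rw [Complex.norm_cpow_eq_rpow_re_of_pos (by positivity)]
      simp [Complex.sub_re]
    simp only [hnorm]
    have h0 : Tendsto (fun x : ℝ => x ^ (1 - s.re)) atTop (𝓝 0) := by
      rw [show 1 - s.re = -(s.re - 1) by ring]
      exact tendsto_rpow_neg_atTop (by linarith)
    have hcomp : Tendsto (fun N : ℕ => (N:ℝ) + 1) atTop atTop :=
      tendsto_atTop_add_const_right _ 1 tendsto_natCast_atTop_atTop
    have := (h0.comp hcomp).div_const ‖1 - s‖
    simpa using this
  have hC := hsum.hasSum.tendsto_sum_nat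
  have hD : Tendsto (fun N => ∑ n ∈ Finset.range N, zf n s) atTop
      (𝓝 (riemannZeta s - (0 - 1 / (1 - s)))) := by
    simp only [sum_range_zf hs1]
    exact hA.sub (hB.sub tendsto_const_nhds)
  have heq := tendsto_nhds_unique hC hD
  rw [heq]
  have hne : (1:ℂ) - s ≠ 0 := sub_ne_zero.2 (Ne.symm hs1)
  have hne' : s - 1 ≠ 0 := sub_ne_zero.2 hs1
  field_simp
  ring

def UU : Set ℂ := {s | 0 < s.re ∧ s ≠ 1}

lemma isOpen_UU : IsOpen UU := by
  have h : UU = {s : ℂ | 0 < s.re} ∩ {(1:ℂ)}ᶜ := by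
    ext s; simp [UU]
  rw [h]
  exact (isOpen_lt continuous_const Complex.continuous_re).inter isOpen_compl_singleton

lemma preconn_UU : IsPreconnected UU := by
  set A : Set ℂ := {s | 0 < s.re} ∩ {s | 0 < s.im} with hA_def
  set B : Set ℂ := {s | 0 < s.re} ∩ {s | s.im < 0} with hB_def
  set C : Set ℂ := {s | 0 < s.re} ∩ {s | s.re < 1} with hC_def
  set D : Set ℂ := {s | 1 < s.re} with hD_def
  have hA : IsPreconnected A :=
    ((convex_halfSpace_re_gt 0).inter (convex_halfSpace_im_gt 0)).isPreconnected
  have hB : IsPreconnected B :=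
    ((convex_halfSpace_re_gt 0).inter (convex_halfSpace_im_lt 0)).isPreconnected
  have hC : IsPreconnected C :=
    ((convex_halfSpace_re_gt 0).inter (convex_halfSpace_re_lt 1)).isPreconnected
  have hD : IsPreconnected D := (convex_halfSpace_re_gt 1).isPreconnected
  have hAC : IsPreconnected (A ∪ C) := by
    apply hA.union (⟨1/2, 1/2⟩ : ℂ) _ _ hC
    · exact ⟨by norm_num, by norm_num⟩
    · exact ⟨by norm_num, by norm_num⟩
  have hACB : IsPreconnected ((A ∪ C) ∪ B) := by
    apply hAC.union (⟨1/2, -1/2⟩ : ℂ) _ _ hB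
    · exact Or.inr ⟨by norm_num, by norm_num⟩
    · exact ⟨by norm_num, by norm_num⟩
  have hACBD : IsPreconnected (((A ∪ C) ∪ B) ∪ D) := by
    apply hACB.union (⟨2, 1⟩ : ℂ) _ _ hD
    · exact Or.inl (Or.inl ⟨by norm_num, by norm_num⟩)
    · exact (by norm_num : (1:ℝ) < 2)
  have hU : UU = ((A ∪ C) ∪ B) ∪ D := by
    ext s
    simp only [UU, hA_def, hB_def, hC_def, hD_def, Set.mem_union, Set.mem_inter_iff,
      Set.mem_setOf_eq]
    constructor
    · rintro ⟨h1, h2⟩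
      rcases lt_trichotomy s.im 0 with him | him | him
      · exact Or.inl (Or.inr ⟨h1, him⟩)
      · rcases lt_trichotomy s.re 1 with hre | hre | hre
        · exact Or.inl (Or.inl (Or.inr ⟨h1, hre⟩))
        · exfalso
          apply h2
          apply Complex.ext <;> simp [hre, him]
        · exact Or.inr hre
      · exact Or.inl (Or.inl (Or.inl ⟨h1, him⟩))
    · rintro (((⟨h1, h2⟩ | ⟨h1, h2⟩) | ⟨h1, h2⟩) | h1)
      · refine ⟨h1, fun h => ?_⟩
        rw [h] at h2; simp at h2
      · refine ⟨h1, fun h => ?_⟩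
        rw [h] at h2; simp at h2
      · refine ⟨h1, fun h => ?_⟩
        rw [h] at h2; simp at h2
      · refine ⟨by linarith, fun h => ?_⟩
        rw [h] at h1; simp at h1
  rw [hU]
  exact hACBD

lemma zf_diffOn : DifferentiableOn ℂ (fun s => ∑' n, zf n s) UU := by
  intro s₀ hs₀
  obtain ⟨hre₀, hne₀⟩ := hs₀
  set r : ℝ := min (s₀.re / 2) (‖s₀ - 1‖ / 2) with hr_def
  have hs₀1 : ‖s₀ - 1‖ > 0 := by
    exact norm_pos_iff.mpr (sub_ne_zero.2 hne₀)
  have hr : 0 < r := lt_min (by linarith) (by linarith)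
  have hball : Metric.ball s₀ r ⊆ UU := by
    intro s hs
    rw [Metric.mem_ball, Complex.dist_eq] at hs
    constructor
    · have h1 : |(s - s₀).re| ≤ ‖s - s₀‖ := Complex.abs_re_le_norm _
      have h2 : ‖s - s₀‖ < s₀.re / 2 := lt_of_lt_of_le hs (min_le_left _ _)
      have h3 : (s - s₀).re = s.re - s₀.re := by simp
      rw [h3] at h1
      have := abs_le.1 h1
      linarith [this.1]
    · intro h
      rw [h] at hs
      have h2 : ‖1 - s₀‖ < ‖s₀ - 1‖ / 2 := lt_of_lt_of_le hs (min_le_right _ _)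
      rw [show (1:ℂ) - s₀ = -(s₀ - 1) by ring, norm_neg] at h2
      linarith [norm_nonneg (s₀ - 1)]
  have hrebound : ∀ s ∈ Metric.ball s₀ r, s₀.re / 2 ≤ s.re := by
    intro s hs
    rw [Metric.mem_ball, Complex.dist_eq] at hs
    have h1 : |(s - s₀).re| ≤ ‖s - s₀‖ := Complex.abs_re_le_norm _
    have h2 : ‖s - s₀‖ < s₀.re / 2 := lt_of_lt_of_le hs (min_le_left _ _)
    have h3 : (s - s₀).re = s.re - s₀.re := by simp
    rw [h3] at h1
    have := abs_le.1 h1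
    linarith [this.1]
  have hnormbound : ∀ s ∈ Metric.ball s₀ r, ‖s‖ ≤ ‖s₀‖ + r := by
    intro s hs
    rw [Metric.mem_ball, dist_eq_norm] at hs
    calc ‖s‖ = ‖s₀ + (s - s₀)‖ := by ring_nf
      _ ≤ ‖s₀‖ + ‖s - s₀‖ := norm_add_le _ _
      _ ≤ ‖s₀‖ + r := by linarith
  set u : ℕ → ℝ := fun n => (‖s₀‖ + r) * ((n:ℝ) + 1) ^ (-(s₀.re / 2) - 1) with hu_def
  have hu : Summable u := (summable_aux (by linarith)).mul_left _
  have hle : ∀ (n : ℕ) (s : ℂ), s ∈ Metric.ball s₀ r → ‖zf n s‖ ≤ u n := by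
    intro n s hs
    have h1 : 0 < s.re := lt_of_lt_of_le (by linarith) (hrebound s hs)
    refine (zf_norm_le h1 n).trans ?_
    have hb : ((n:ℝ) + 1) ^ (-s.re - 1) ≤ ((n:ℝ) + 1) ^ (-(s₀.re / 2) - 1) := by
      apply Real.rpow_le_rpow_of_exponent_le (le_add_of_nonneg_left (Nat.cast_nonneg n))
      have := hrebound s hs
      linarith
    apply mul_le_mul (hnormbound s hs) hb (by positivity)
    positivity
  have hdiff : ∀ n : ℕ, DifferentiableOn ℂ (zf n) (Metric.ball s₀ r) := by
    intro n
    have heq : Set.EqOn (zf n)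
        (fun s => (((n:ℝ) + 1 : ℝ) : ℂ) ^ (-s)
          - ((((n:ℝ) + 2 : ℝ) : ℂ) ^ (1 - s) - (((n:ℝ) + 1 : ℝ) : ℂ) ^ (1 - s)) / (1 - s))
        (Metric.ball s₀ r) := by
      intro s hs
      exact zf_eq (hball hs).2 n
    apply DifferentiableOn.congr _ heq
    intro s hs
    have hs1 : (1:ℂ) - s ≠ 0 := sub_ne_zero.2 (Ne.symm (hball hs).2)
    have hb1 : ((((n:ℝ) + 1 : ℝ)) : ℂ) ≠ 0 := by
      simp only [ne_eq, Complex.ofReal_eq_zero]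
      positivity
    have hb2 : ((((n:ℝ) + 2 : ℝ)) : ℂ) ≠ 0 := by
      simp only [ne_eq, Complex.ofReal_eq_zero]
      positivity
    apply DifferentiableWithinAt.sub
    · exact ((differentiable_neg.differentiableAt).const_cpow (Or.inl hb1)).differentiableWithinAt
    · apply DifferentiableWithinAt.div
      · apply DifferentiableWithinAt.sub
        · exact (((differentiable_const (1:ℂ)).sub differentiable_id).differentiableAt.const_cpow
            (Or.inl hb2)).differentiableWithinAt
        · exact (((differentiable_const (1:ℂ)).sub differentiable_id).differentiableAt.const_cpow
            (Or.inl hb1)).differentiableWithinAt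
      · exact ((differentiable_const (1:ℂ)).sub differentiable_id).differentiableAt.differentiableWithinAt
      · exact hs1
  have := differentiableOn_tsum_of_summable_norm hu hdiff Metric.isOpen_ball hle
  exact (this.differentiableAt (Metric.isOpen_ball.mem_nhds (Metric.mem_ball_self hr))).differentiableWithinAt

lemma zeta_eq_UU : ∀ s ∈ UU, riemannZeta s = 1 / (s - 1) + ∑' n, zf n s := by
  have hζ : AnalyticOnNhd ℂ riemannZeta UU := by
    apply DifferentiableOn.analyticOnNhd _ isOpen_UU
    exact fun s hs => (differentiableAt_riemannZeta hs.2).differentiableWithinAt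
  have hg : AnalyticOnNhd ℂ (fun s => 1 / (s - 1) + ∑' n, zf n s) UU := by
    apply DifferentiableOn.analyticOnNhd _ isOpen_UU
    apply DifferentiableOn.add _ zf_diffOn
    intro s hs
    apply DifferentiableWithinAt.div
    · exact (differentiable_const (1:ℂ)).differentiableAt.differentiableWithinAt
    · exact (differentiable_id.sub (differentiable_const (1:ℂ))).differentiableAt.differentiableWithinAt
    · exact sub_ne_zero.2 hs.2
  have h2 : (2:ℂ) ∈ UU := by
    constructor
    · norm_num
    · norm_num
  have hev : riemannZeta =ᶠ[𝓝 (2:ℂ)] fun s => 1 / (s - 1) + ∑' n, zf n s := by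
    have hopen : IsOpen {s : ℂ | 1 < s.re} := isOpen_lt continuous_const Complex.continuous_re
    have hmem : {s : ℂ | 1 < s.re} ∈ 𝓝 (2:ℂ) := hopen.mem_nhds (by norm_num)
    exact Filter.eventually_of_mem hmem fun s hs => key_gt_one hs
  exact fun s hs => hζ.eqOn_of_preconnected_of_eventuallyEq hg preconn_UU h2 hev hs

open intervalIntegral in
lemma tail_bound {σ : ℝ} (hσ : 0 < σ) {N : ℕ} (hN : 1 ≤ N) :
    ∑' n : ℕ, ((n:ℝ) + (N:ℝ) + 1) ^ (-σ - 1) ≤ (N:ℝ) ^ (-σ) / σ := by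
  have hN0 : (0:ℝ) < N := by exact_mod_cast hN
  apply Real.tsum_le_of_sum_range_le (fun n => by positivity)
  intro k
  have hanti : AntitoneOn (fun x : ℝ => x ^ (-σ - 1)) (Set.Icc (N:ℝ) ((N:ℝ) + k)) := by
    intro x hx y hy hxy
    exact Real.rpow_le_rpow_of_nonpos (lt_of_lt_of_le hN0 hx.1) hxy (by linarith)
  have hint := hanti.sum_le_integral
  have hsum_eq : ∑ i ∈ Finset.range k, ((i:ℝ) + (N:ℝ) + 1) ^ (-σ - 1)
      = ∑ i ∈ Finset.range k, (fun x : ℝ => x ^ (-σ - 1)) ((N:ℝ) + ((i:ℕ) + 1 : ℕ)) := by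
    apply Finset.sum_congr rfl
    intro i _
    simp only
    congr 1
    push_cast
    ring
  rw [hsum_eq]
  refine hint.trans ?_
  have h0 : (0:ℝ) ∉ [[(N:ℝ), (N:ℝ) + k]] := by
    rw [Set.uIcc_of_le (le_add_of_nonneg_right (by positivity))]
    rintro ⟨h, -⟩
    linarith
  rw [integral_rpow (Or.inr ⟨by linarith, h0⟩)]
  rw [show -σ - 1 + 1 = -σ by ring]
  have h1 : (0:ℝ) ≤ ((N:ℝ) + k) ^ (-σ) := by positivity
  have hlhs : (((N:ℝ) + k) ^ (-σ) - (N:ℝ) ^ (-σ)) / (-σ)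
      = ((N:ℝ) ^ (-σ) - ((N:ℝ) + k) ^ (-σ)) / σ := by
    rw [div_neg, ← neg_div]
    ring_nf
  rw [hlhs]
  gcongr
  linarith

lemma sum_inv_sqrt : ∀ N : ℕ, ∑ n ∈ Finset.range N, ((n:ℝ) + 1) ^ (-(1/2) : ℝ) ≤ 2 * Real.sqrt N := by
  intro N
  induction N with
  | zero => simp
  | succ N ih =>
    rw [Finset.sum_range_succ]
    have h1 : ((N:ℝ) + 1) ^ (-(1/2) : ℝ) = 1 / Real.sqrt ((N:ℝ) + 1) := by
      rw [Real.rpow_neg (by positivity), Real.sqrt_eq_rpow]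
      norm_num
    have hs1 := Real.sq_sqrt (show (0:ℝ) ≤ (N:ℝ) + 1 by positivity)
    have hs2 := Real.sq_sqrt (Nat.cast_nonneg N : (0:ℝ) ≤ (N:ℝ))
    have hpos : 0 < Real.sqrt ((N:ℝ) + 1) := Real.sqrt_pos.2 (by positivity)
    have hnn : 0 ≤ Real.sqrt (N:ℝ) := Real.sqrt_nonneg _
    have hcast : ((N + 1 : ℕ) : ℝ) = (N:ℝ) + 1 := by push_cast; ring
    rw [h1, hcast]
    have hdiv : 1 / Real.sqrt ((N:ℝ) + 1) * Real.sqrt ((N:ℝ) + 1) = 1 := by field_simp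
    nlinarith [ih, hs1, hs2, hdiv, hpos, hnn, sq_nonneg (Real.sqrt ((N:ℝ) + 1) - Real.sqrt (N:ℝ))]


/-- There exists a positive constant `c₁` such that for all real `σ ≥ 1/2` and all real `t`
with `|t| ≥ 2`, `|ζ(σ + it)| ≤ c₁ |t|^{1/2}`. -/
theorem zeta_bound_sqrt :
    ∃ c₁ : ℝ, 0 < c₁ ∧ ∀ σ t : ℝ, 1 / 2 ≤ σ → 2 ≤ |t| →
      ‖riemannZeta ((σ : ℂ) + t * I)‖ ≤ c₁ * |t| ^ ((1 : ℝ) / 2) := by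
  refine ⟨10, by norm_num, ?_⟩
  intro σ t hσ ht
  set s : ℂ := (σ : ℂ) + t * I with hs_def
  have hsre : s.re = σ := by simp [hs_def]
  have hsim : s.im = t := by simp [hs_def]
  have hσ0 : (0:ℝ) < σ := lt_of_lt_of_le (by norm_num) hσ
  have ht1 : (1:ℝ) ≤ |t| := by linarith
  have ht0 : (0:ℝ) < |t| := by linarith
  have hsU : s ∈ UU := by
    refine ⟨by rw [hsre]; exact hσ0, fun h => ?_⟩
    have h1 : s.im = 0 := by rw [h]; simp
    rw [hsim] at h1
    rw [h1] at ht
    norm_num at ht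
  have hs1 : s ≠ 1 := hsU.2
  have hs_re : 0 < s.re := by rw [hsre]; exact hσ0
  set N : ℕ := ⌊|t|⌋₊ with hN_def
  have hN2 : 2 ≤ N := Nat.le_floor (by exact_mod_cast ht)
  have hN2' : (2:ℝ) ≤ (N:ℝ) := by exact_mod_cast hN2
  have hN0 : (0:ℝ) < (N:ℝ) := by linarith
  have hNle : (N:ℝ) ≤ |t| := Nat.floor_le (abs_nonneg t)
  have hNgt : |t| < (N:ℝ) + 1 := Nat.lt_floor_add_one _
  have ht2N : |t| ≤ 2 * (N:ℝ) := by linarith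
  set Q : ℝ := Real.sqrt |t| with hQ_def
  have hQ1 : (1:ℝ) ≤ Q := by
    rw [hQ_def, ← Real.sqrt_one]
    exact Real.sqrt_le_sqrt ht1
  -- decomposition
  have hsum := zf_summable hs_re
  have hsplit := hsum.sum_add_tsum_nat_add N
  have hrep : riemannZeta s
      = ((∑ n ∈ Finset.range N, (((n:ℝ) + 1 : ℝ) : ℂ) ^ (-s))
        - (((N:ℝ) + 1 : ℝ) : ℂ) ^ (1 - s) / (1 - s))
        + ∑' n, zf (n + N) s := by
    rw [zeta_eq_UU s hsU, ← hsplit, sum_range_zf hs1 N]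
    have hne : (1:ℂ) - s ≠ 0 := sub_ne_zero.2 (Ne.symm hs1)
    have hne' : s - 1 ≠ 0 := sub_ne_zero.2 hs1
    field_simp
    ring
  -- bound the three pieces
  have hA : ‖∑ n ∈ Finset.range N, (((n:ℝ) + 1 : ℝ) : ℂ) ^ (-s)‖ ≤ 2 * Q := by
    refine (norm_sum_le _ _).trans ?_
    have h1 : ∀ n ∈ Finset.range N,
        ‖(((n:ℝ) + 1 : ℝ) : ℂ) ^ (-s)‖ ≤ ((n:ℝ) + 1) ^ (-(1/2) : ℝ) := by
      intro n _
      rw [Complex.norm_cpow_eq_rpow_re_of_pos (by positivity)]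
      have he : (-s).re = -σ := by simp [hsre]
      rw [he]
      exact Real.rpow_le_rpow_of_exponent_le (le_add_of_nonneg_left (Nat.cast_nonneg n))
        (by linarith)
    refine (Finset.sum_le_sum h1).trans ?_
    refine (sum_inv_sqrt N).trans ?_
    have := Real.sqrt_le_sqrt hNle
    rw [hQ_def]
    linarith
  have hB : ‖(((N:ℝ) + 1 : ℝ) : ℂ) ^ (1 - s) / (1 - s)‖ ≤ Q := by
    rw [norm_div]
    have hnum : ‖(((N:ℝ) + 1 : ℝ) : ℂ) ^ (1 - s)‖ ≤ |t| := by
      rw [Complex.norm_cpow_eq_rpow_re_of_pos (by positivity)]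
      have he : (1 - s).re = 1 - σ := by simp [hsre]
      rw [he]
      calc ((N:ℝ) + 1) ^ (1 - σ) ≤ ((N:ℝ) + 1) ^ ((1:ℝ)/2) :=
            Real.rpow_le_rpow_of_exponent_le (by linarith) (by linarith)
        _ ≤ (|t|^2) ^ ((1:ℝ)/2) := by
            apply Real.rpow_le_rpow (by positivity) _ (by norm_num)
            nlinarith
        _ = |t| := by
            rw [← Real.sqrt_eq_rpow, Real.sqrt_sq (abs_nonneg t)]
    have hden : |t| ≤ ‖1 - s‖ := by
      have h1 : |(1 - s).im| ≤ ‖1 - s‖ := Complex.abs_im_le_norm _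
      have h2 : (1 - s).im = -t := by simp [hsim]
      rw [h2, abs_neg] at h1
      simpa using h1
    calc ‖(((N:ℝ) + 1 : ℝ) : ℂ) ^ (1 - s)‖ / ‖1 - s‖ ≤ |t| / |t| :=
          div_le_div₀ (abs_nonneg t) hnum ht0 hden
      _ = 1 := div_self ht0.ne'
      _ ≤ Q := hQ1
  have hT : ‖∑' n, zf (n + N) s‖ ≤ 5 * Q := by
    have hbnd : ∀ n : ℕ, ‖zf (n + N) s‖ ≤ ‖s‖ * ((n:ℝ) + (N:ℝ) + 1) ^ (-σ - 1) := by
      intro n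
      have h := zf_norm_le hs_re (n + N)
      rw [hsre] at h
      have hcast : (((n + N : ℕ)):ℝ) + 1 = (n:ℝ) + (N:ℝ) + 1 := by push_cast; ring
      rw [hcast] at h
      exact h
    have hsummable_bnd : Summable (fun n : ℕ => ‖s‖ * ((n:ℝ) + (N:ℝ) + 1) ^ (-σ - 1)) := by
      apply Summable.mul_left
      apply Summable.of_nonneg_of_le (fun n => by positivity) _
        (summable_aux (q := -σ - 1) (by linarith))
      intro n
      exact Real.rpow_le_rpow_of_nonpos (by positivity) (by linarith) (by linarith)
    refine (tsum_of_norm_bounded hsummable_bnd.hasSum hbnd).trans ?_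
    rw [tsum_mul_left]
    have htail := tail_bound hσ0 (N := N) (le_trans one_le_two hN2)
    have hnorm_s : ‖s‖ ≤ σ + |t| := by
      refine (Complex.norm_le_abs_re_add_abs_im s).trans ?_
      rw [hsre, hsim, abs_of_pos hσ0]
    have htsum_nonneg : (0:ℝ) ≤ ∑' n : ℕ, ((n:ℝ) + (N:ℝ) + 1) ^ (-σ - 1) :=
      tsum_nonneg fun n => by positivity
    calc ‖s‖ * ∑' n : ℕ, ((n:ℝ) + (N:ℝ) + 1) ^ (-σ - 1)
        ≤ (σ + |t|) * ((N:ℝ) ^ (-σ) / σ) := by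
          apply mul_le_mul hnorm_s htail htsum_nonneg (by positivity)
      _ = (N:ℝ) ^ (-σ) + |t| * (N:ℝ) ^ (-σ) / σ := by field_simp
      _ ≤ 1 + 4 * Q := by
          have e1 : (N:ℝ) ^ (-σ) ≤ 1 :=
            Real.rpow_le_one_of_one_le_of_nonpos (by linarith) (by linarith)
          have e2 : (N:ℝ) ^ (-σ) ≤ (N:ℝ) ^ (-(1/2) : ℝ) :=
            Real.rpow_le_rpow_of_exponent_le (by linarith) (by linarith)
          have e3 : (N:ℝ) ^ (-(1/2) : ℝ) = 1 / Real.sqrt (N:ℝ) := by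
            rw [Real.rpow_neg (by positivity), Real.sqrt_eq_rpow]
            norm_num
          have hsqN : 0 < Real.sqrt (N:ℝ) := Real.sqrt_pos.2 hN0
          have hmul : Real.sqrt (N:ℝ) * Real.sqrt (N:ℝ) = (N:ℝ) :=
            Real.mul_self_sqrt hN0.le
          have e4 : |t| * ((N:ℝ) ^ (-(1/2) : ℝ)) ≤ 2 * Q := by
            rw [e3, mul_one_div, div_le_iff₀ hsqN]
            have e5 : Real.sqrt (N:ℝ) ≤ Q := by
              rw [hQ_def]; exact Real.sqrt_le_sqrt hNle
            nlinarith
          have e6 : |t| * (N:ℝ) ^ (-σ) / σ ≤ 2 * (|t| * (N:ℝ) ^ (-(1/2) : ℝ)) := by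
            rw [div_le_iff₀ hσ0]
            have e7 : |t| * (N:ℝ) ^ (-σ) ≤ |t| * (N:ℝ) ^ (-(1/2) : ℝ) :=
              mul_le_mul_of_nonneg_left e2 (abs_nonneg t)
            nlinarith [(by positivity : (0:ℝ) ≤ |t| * (N:ℝ) ^ (-(1/2) : ℝ))]
          linarith
      _ ≤ 5 * Q := by linarith
  -- assemble
  have hQrpow : Q = |t| ^ ((1:ℝ)/2) := by
    rw [hQ_def, Real.sqrt_eq_rpow]
  rw [hrep]
  calc ‖((∑ n ∈ Finset.range N, (((n:ℝ) + 1 : ℝ) : ℂ) ^ (-s))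
        - (((N:ℝ) + 1 : ℝ) : ℂ) ^ (1 - s) / (1 - s))
        + ∑' n, zf (n + N) s‖
      ≤ ‖(∑ n ∈ Finset.range N, (((n:ℝ) + 1 : ℝ) : ℂ) ^ (-s))
        - (((N:ℝ) + 1 : ℝ) : ℂ) ^ (1 - s) / (1 - s)‖ + ‖∑' n, zf (n + N) s‖ :=
        norm_add_le _ _
    _ ≤ (‖∑ n ∈ Finset.range N, (((n:ℝ) + 1 : ℝ) : ℂ) ^ (-s)‖
        + ‖(((N:ℝ) + 1 : ℝ) : ℂ) ^ (1 - s) / (1 - s)‖) + ‖∑' n, zf (n + N) s‖ :=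
        add_le_add_left (norm_sub_le _ _) _
    _ ≤ (2 * Q + Q) + 5 * Q := by
        apply add_le_add (add_le_add hA hB) hT
    _ ≤ 10 * |t| ^ ((1:ℝ)/2) := by
        rw [← hQrpow]
        linarith
end

section
/- (Borel–Carathéodory) Let f be analytic on the closed disc |z − z₀| ≤ R and let 0 < r < R. Then for every z with |z − z₀| ≤ r, |f(z) − f(z₀)| ≤ (2r/(R − r)) · (A(R) − Re f(z₀)), where A(R) = max_{|z − z₀| ≤ R} Re f(z). -/
open Complex Metric

/-- **Borel–Carathéodory.** Let `f` be analytic on the closed disc `|z − z₀| ≤ R` and let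
`0 < r < R`.  Then for every `z` with `|z − z₀| ≤ r`,
`|f z − f z₀| ≤ (2r/(R − r)) (A(R) − Re (f z₀))`, where `A(R)` is the maximum of `Re (f z)`
over the closed disc `|z − z₀| ≤ R`. -/
theorem borel_caratheodory
    (f : ℂ → ℂ) (z₀ : ℂ) (R r : ℝ) (hr : 0 < r) (hrR : r < R)
    (hf : ∀ z ∈ closedBall z₀ R, AnalyticAt ℂ f z)
    (A : ℝ) (hA : IsGreatest ((fun z => (f z).re) '' closedBall z₀ R) A) :
    ∀ z ∈ closedBall z₀ r,
      ‖f z - f z₀‖ ≤ (2 * r / (R - r)) * (A - (f z₀).re) := by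
  intro z hz
  have hR : 0 < R := hr.trans hrR
  have hRr : 0 < R - r := sub_pos.2 hrR
  have hz0 : z₀ ∈ closedBall z₀ R := mem_closedBall_self hR.le
  have hRe : ∀ w ∈ closedBall z₀ R, (f w).re ≤ A := fun w hw => hA.2 ⟨w, hw, rfl⟩
  have hM0 : 0 ≤ A - (f z₀).re := sub_nonneg.2 (hRe z₀ hz0)
  have hzR : z ∈ closedBall z₀ R :=
    closedBall_subset_closedBall hrR.le hz
  have hzball : z ∈ ball z₀ R := lt_of_le_of_lt (mem_closedBall.1 hz) hrR
  -- main bound for every `M' > A - Re (f z₀)`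
  have hbound : ∀ M' : ℝ, A - (f z₀).re < M' →
      ‖f z - f z₀‖ ≤ 2 * r / (R - r) * M' := by
    intro M' hM'
    have hM'0 : 0 < M' := lt_of_le_of_lt hM0 hM'
    set φ : ℂ → ℂ := fun w => (f w - f z₀) / (((2 * M' : ℝ) : ℂ) - (f w - f z₀)) with hφ
    have hden : ∀ w ∈ closedBall z₀ R, (((2 * M' : ℝ) : ℂ) - (f w - f z₀)) ≠ 0 := by
      intro w hw
      have h1 : (f w).re ≤ A := hRe w hw
      have hpos : 0 < ((((2 * M' : ℝ) : ℂ) - (f w - f z₀))).re := by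
        simp only [Complex.sub_re, Complex.ofReal_re]
        linarith
      intro h
      rw [h] at hpos
      simp at hpos
    have hdiff : DifferentiableOn ℂ φ (ball z₀ R) := by
      intro w hw
      have hw' : w ∈ closedBall z₀ R := ball_subset_closedBall hw
      have hfa : DifferentiableAt ℂ f w := (hf w hw').differentiableAt
      exact (((hfa.sub (differentiableAt_const _)).div
        ((differentiableAt_const _).sub (hfa.sub (differentiableAt_const _)))
        (hden w hw'))).differentiableWithinAt
    have hφ0 : φ z₀ = 0 := by simp [hφ]
    have hmaps : Set.MapsTo φ (ball z₀ R) (ball (φ z₀) 1) := by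
      intro w hw
      have hw' : w ∈ closedBall z₀ R := ball_subset_closedBall hw
      rw [mem_ball, hφ0, dist_zero_right]
      have hd := hden w hw'
      have h1 : (f w).re ≤ A := hRe w hw'
      have hlt : ‖f w - f z₀‖ <
          ‖((2 * M' : ℝ) : ℂ) - (f w - f z₀)‖ := by
        have hsq : ‖f w - f z₀‖ ^ 2 <
            ‖((2 * M' : ℝ) : ℂ) - (f w - f z₀)‖ ^ 2 := by
          rw [Complex.sq_norm, Complex.sq_norm]
          simp only [Complex.normSq_apply, Complex.sub_re, Complex.sub_im,
            Complex.ofReal_re, Complex.ofReal_im]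
          nlinarith [h1, hM', hM'0]
        have h0 : 0 ≤ ‖f w - f z₀‖ := (norm_nonneg _)
        nlinarith [norm_nonneg (((2 * M' : ℝ) : ℂ) - (f w - f z₀))]
      rw [hφ]
      simp only
      rw [norm_div]
      exact div_lt_one (lt_of_le_of_lt (norm_nonneg _) hlt) |>.2 hlt
    have hs := Complex.dist_le_div_mul_dist_of_mapsTo_ball hdiff (hmaps.mono_right ball_subset_closedBall) hzball
    rw [hφ0, dist_zero_right] at hs
    have hφz : ‖φ z‖ ≤ r / R := by
      calc ‖φ z‖ ≤ 1 / R * dist z z₀ := hs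
        _ ≤ 1 / R * r := by
            have := mem_closedBall.1 hz
            gcongr
        _ = r / R := by ring
    -- recover f z - f z₀ from φ z
    have hdz := hden z hzR
    have key : (f z - f z₀) * (1 + φ z) = ((2 * M' : ℝ) : ℂ) * φ z := by
      have h' : φ z * (((2 * M' : ℝ) : ℂ) - (f z - f z₀)) = f z - f z₀ :=
        div_mul_cancel₀ _ hdz
      linear_combination -h'
    have habs : ‖f z - f z₀‖ * ‖1 + φ z‖
        = 2 * M' * ‖φ z‖ := by
      rw [← norm_mul, key, norm_mul, Complex.norm_real, Real.norm_eq_abs, abs_of_pos (by linarith)]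
    have htri : 1 - ‖φ z‖ ≤ ‖1 + φ z‖ := by
      have h := norm_sub_le (1 + φ z) (φ z)
      simp only [add_sub_cancel_right, norm_one] at h
      linarith
    have hlow : (R - r) / R ≤ ‖1 + φ z‖ := by
      have : 1 - r / R ≤ 1 - ‖φ z‖ := by linarith
      calc (R - r) / R = 1 - r / R := by field_simp
        _ ≤ ‖1 + φ z‖ := le_trans this htri
    have hfinal : ‖f z - f z₀‖ * ((R - r) / R) ≤ 2 * M' * (r / R) := by
      calc ‖f z - f z₀‖ * ((R - r) / R)
          ≤ ‖f z - f z₀‖ * ‖1 + φ z‖ := by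
            gcongr
        _ = 2 * M' * ‖φ z‖ := habs
        _ ≤ 2 * M' * (r / R) := by gcongr
    rw [div_mul_eq_mul_div, le_div_iff₀ hRr]
    have hmul := mul_le_mul_of_nonneg_right hfinal hR.le
    rw [mul_assoc, div_mul_cancel₀ _ hR.ne', mul_assoc, div_mul_cancel₀ _ hR.ne'] at hmul
    nlinarith [hmul]
  -- pass to the limit `M' → A - Re (f z₀)`
  by_contra hcon
  push_neg at hcon
  have hC : 0 < 2 * r / (R - r) := by positivity
  set X := ‖f z - f z₀‖ with hX
  set M := A - (f z₀).re with hM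
  have h1 : M < X / (2 * r / (R - r)) := by
    rw [lt_div_iff₀ hC]
    linarith [hcon]
  set M'' := (M + X / (2 * r / (R - r))) / 2 with hM''
  have h2 : M < M'' := by rw [hM'']; linarith
  have h3 : M'' < X / (2 * r / (R - r)) := by rw [hM'']; linarith
  have h4 := hbound M'' h2
  have h5 : 2 * r / (R - r) * M'' < X := by
    have := (lt_div_iff₀' hC).1 h3
    linarith [this]
  linarith
end
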